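/- arXiv:1909.09717 — 10 statements merged into one kernel-verified Lean document; each statement's English description precedes it below -/
import Mathlib

section
/- Let A be a normed division algebra. Then for all a, b, c ∈ A one has ⟨a*c, b*c⟩ = ⟨a, b⟩·‖c‖² and ⟨c*a, c*b⟩ = ⟨a, b⟩·‖c‖². -/
open scoped RealInnerProductSpace

/-- A normed division algebra: a real inner product space with an `ℝ`-bilinear
multiplication (not necessarily associative or commutative), a two-sided
multiplicative identity `one ≠ 0`, satisfying `‖a*b‖ = ‖a‖ * ‖b‖`. -/
structure NormedDivisionAlgebra (A : Type*) [NormedAddCommGroup A] [InnerProductSpace ℝ A] where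
  mul : A →ₗ[ℝ] A →ₗ[ℝ] A
  one : A
  one_ne_zero : one ≠ 0
  one_mul : ∀ a : A, mul one a = a
  mul_one : ∀ a : A, mul a one = a
  norm_mul : ∀ a b : A, ‖mul a b‖ = ‖a‖ * ‖b‖

namespace NormedDivisionAlgebra

variable {A : Type*} [NormedAddCommGroup A] [InnerProductSpace ℝ A]

/-- `Re a`: the orthogonal projection of `a` onto the real part `Re A = ℝ · 1`. -/
noncomputable def re (D : NormedDivisionAlgebra A) (a : A) : A :=
  (⟪a, D.one⟫ / ‖D.one‖ ^ 2) • D.one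

/-- `Im a`: the orthogonal projection of `a` onto the imaginary part `Im A = (ℝ · 1)ᗮ`. -/
noncomputable def im (D : NormedDivisionAlgebra A) (a : A) : A := a - D.re a

/-- The conjugate `conj a = Re a - Im a`. -/
noncomputable def conj (D : NormedDivisionAlgebra A) (a : A) : A := D.re a - D.im a

/-- The real part `Re A = ℝ · 1` as a submodule. -/
def ReSub (D : NormedDivisionAlgebra A) : Submodule ℝ A := Submodule.span ℝ {D.one}

/-- The imaginary part `Im A = (ℝ · 1)ᗮ` as a submodule. -/
noncomputable def ImSub (D : NormedDivisionAlgebra A) : Submodule ℝ A := (Submodule.span ℝ {D.one})ᗮ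

/-- The commutator `[a, b] = a*b - b*a`. -/
def comm (D : NormedDivisionAlgebra A) (a b : A) : A := D.mul a b - D.mul b a

/-- The associator `[a, b, c] = (a*b)*c - a*(b*c)`. -/
def assoc (D : NormedDivisionAlgebra A) (a b c : A) : A :=
  D.mul (D.mul a b) c - D.mul a (D.mul b c)

/-- The cross product `a × b = Im (a*b)` (intended for `a, b ∈ Im A`). -/
noncomputable def cross (D : NormedDivisionAlgebra A) (a b : A) : A := D.im (D.mul a b)

end NormedDivisionAlgebra

theorem nda_inner_mul_right_left {A : Type*} [NormedAddCommGroup A] [InnerProductSpace ℝ A]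
    (D : NormedDivisionAlgebra A) (a b c : A) :
    ⟪D.mul a c, D.mul b c⟫ = ⟪a, b⟫ * ‖c‖ ^ 2 ∧
      ⟪D.mul c a, D.mul c b⟫ = ⟪a, b⟫ * ‖c‖ ^ 2 := by
  have key : ∀ x y : A, ⟪x, y⟫ = (‖x + y‖ ^ 2 - ‖x‖ ^ 2 - ‖y‖ ^ 2) / 2 := by
    intro x y
    have := norm_add_sq_real x y
    linarith
  constructor
  · have h1 : D.mul a c + D.mul b c = D.mul (a + b) c := by
      rw [map_add]; rfl
    rw [key, key a b, h1, D.norm_mul, D.norm_mul, D.norm_mul]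
    ring
  · have h1 : D.mul c a + D.mul c b = D.mul c (a + b) := by
      rw [map_add]
    rw [key, key a b, h1, D.norm_mul, D.norm_mul, D.norm_mul]
    ring
end

section
/- Let A be a normed division algebra. Then for all a, b, c ∈ A one has ⟨a, b*c⟩ = ⟨a * conj(c), b⟩ and ⟨a, c*b⟩ = ⟨conj(c) * a, b⟩. -/
open scoped RealInnerProductSpace

section Aux

variable {A : Type*} [NormedAddCommGroup A] [InnerProductSpace ℝ A]

lemma nda_norm_one (D : NormedDivisionAlgebra A) : ‖D.one‖ = 1 := by
  have h := D.norm_mul D.one D.one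
  rw [D.one_mul] at h
  have h1 : ‖D.one‖ ≠ 0 := norm_ne_zero_iff.mpr D.one_ne_zero
  have h2 : ‖D.one‖ * (‖D.one‖ - 1) = 0 := by rw [mul_sub, mul_one, ← h, sub_self]
  rcases mul_eq_zero.mp h2 with h3 | h3
  · exact absurd h3 h1
  · linarith

lemma nda_inner_left (D : NormedDivisionAlgebra A) (a b c : A) :
    ⟪D.mul a b, D.mul a c⟫ = ‖a‖ ^ 2 * ⟪b, c⟫ := by
  have h : ‖D.mul a (b + c)‖ ^ 2 = (‖a‖ * ‖b + c‖) ^ 2 := by rw [D.norm_mul]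
  rw [map_add, norm_add_sq_real, mul_pow, norm_add_sq_real, D.norm_mul, D.norm_mul] at h
  nlinarith [h]

lemma nda_inner_right (D : NormedDivisionAlgebra A) (a b c : A) :
    ⟪D.mul a c, D.mul b c⟫ = ⟪a, b⟫ * ‖c‖ ^ 2 := by
  have h : ‖D.mul (a + b) c‖ ^ 2 = (‖a + b‖ * ‖c‖) ^ 2 := by rw [D.norm_mul]
  rw [map_add, LinearMap.add_apply, norm_add_sq_real, mul_pow, norm_add_sq_real,
    D.norm_mul, D.norm_mul] at h
  nlinarith [h]

/-- Exchange identity polarized in the second argument. -/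
lemma nda_exchange_right (D : NormedDivisionAlgebra A) (a b c d : A) :
    ⟪D.mul a b, D.mul c d⟫ + ⟪D.mul a d, D.mul c b⟫ = 2 * ⟪a, c⟫ * ⟪b, d⟫ := by
  have h := nda_inner_right D a c (b + d)
  have h1 := nda_inner_right D a c b
  have h2 := nda_inner_right D a c d
  rw [map_add, map_add, norm_add_sq_real] at h
  simp only [inner_add_left, inner_add_right] at h
  linarith [h, h1, h2]

/-- Exchange identity polarized in the first argument. -/
lemma nda_exchange_left (D : NormedDivisionAlgebra A) (a b c d : A) :
    ⟪D.mul a b, D.mul c d⟫ + ⟪D.mul c b, D.mul a d⟫ = 2 * ⟪a, c⟫ * ⟪b, d⟫ := by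
  have h := nda_inner_left D (a + c) b d
  have h1 := nda_inner_left D a b d
  have h2 := nda_inner_left D c b d
  rw [map_add, LinearMap.add_apply, LinearMap.add_apply, norm_add_sq_real] at h
  simp only [inner_add_left, inner_add_right] at h
  linarith [h, h1, h2]

lemma nda_conj_eq (D : NormedDivisionAlgebra A) (c : A) :
    D.conj c = (2 * ⟪c, D.one⟫) • D.one - c := by
  unfold NormedDivisionAlgebra.conj NormedDivisionAlgebra.im NormedDivisionAlgebra.re
  rw [nda_norm_one D]
  simp only [one_pow, div_one]
  module

end Aux

theorem nda_inner_mul_conj {A : Type*} [NormedAddCommGroup A] [InnerProductSpace ℝ A]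
    (D : NormedDivisionAlgebra A) (a b c : A) :
    ⟪a, D.mul b c⟫ = ⟪D.mul a (D.conj c), b⟫ ∧
      ⟪a, D.mul c b⟫ = ⟪D.mul (D.conj c) a, b⟫ := by
  have hone := nda_norm_one D
  constructor
  · -- ⟪a, bc⟫ = ⟪a conj c, b⟫
    have hE := nda_exchange_left D a c b D.one
    rw [D.mul_one, D.mul_one] at hE
    have hc : D.mul a (D.conj c) = (2 * ⟪c, D.one⟫) • a - D.mul a c := by
      rw [nda_conj_eq, map_sub, map_smul, D.mul_one]
    rw [hc, inner_sub_left, real_inner_smul_left]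
    have hcomm : ⟪a, D.mul b c⟫ = ⟪D.mul b c, a⟫ := real_inner_comm _ _
    linarith [hE, hcomm]
  · -- ⟪a, cb⟫ = ⟪conj c · a, b⟫
    have hE := nda_exchange_right D c a D.one b
    rw [D.one_mul, D.one_mul] at hE
    have hc : D.mul (D.conj c) a = (2 * ⟪c, D.one⟫) • a - D.mul c a := by
      rw [nda_conj_eq, map_sub, map_smul]
      simp [D.one_mul]
    rw [hc, inner_sub_left, real_inner_smul_left]
    have hcomm : ⟪D.mul c b, a⟫ = ⟪a, D.mul c b⟫ := real_inner_comm _ _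
    linarith [hE, hcomm]
end

section
/- Let A be a normed division algebra. Then for all a, b, c ∈ A one has: a*(conj(b)*c) + b*(conj(a)*c) = 2⟨a,b⟩ • c, (a*conj(b))*c + (a*conj(c))*b = 2⟨b,c⟩ • a, and a*conj(b) + b*conj(a) = 2⟨a,b⟩ • 1. -/
open scoped RealInnerProductSpace

section Aux
variable {A : Type*} [NormedAddCommGroup A] [InnerProductSpace ℝ A] (D : NormedDivisionAlgebra A)

lemma aux_norm_one : ‖D.one‖ = 1 := by
  have h := D.norm_mul D.one D.one
  rw [D.one_mul] at h
  have h0 : ‖D.one‖ ≠ 0 := norm_ne_zero_iff.mpr D.one_ne_zero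
  have : ‖D.one‖ * 1 = ‖D.one‖ * ‖D.one‖ := by rw [mul_one, ← h]
  exact (mul_left_cancel₀ h0 this).symm

lemma aux_conj_eq (a : A) : D.conj a = (2 * ⟪a, D.one⟫) • D.one - a := by
  simp only [NormedDivisionAlgebra.conj, NormedDivisionAlgebra.im, NormedDivisionAlgebra.re,
    aux_norm_one, one_pow, div_one]
  module

lemma aux_L1 (a b c : A) : ⟪D.mul a b, D.mul a c⟫ = ‖a‖ ^ 2 * ⟪b, c⟫ := by
  have h : ‖D.mul a b + D.mul a c‖ ^ 2 = (‖a‖ * ‖b + c‖) ^ 2 := by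
    rw [← map_add, D.norm_mul]
  rw [mul_pow, norm_add_sq_real, norm_add_sq_real, D.norm_mul, D.norm_mul] at h
  linear_combination h / 2

lemma aux_L2 (a b c : A) : ⟪D.mul a c, D.mul b c⟫ = ⟪a, b⟫ * ‖c‖ ^ 2 := by
  have h : ‖D.mul a c + D.mul b c‖ ^ 2 = (‖a + b‖ * ‖c‖) ^ 2 := by
    rw [← LinearMap.add_apply, ← map_add, D.norm_mul]
  rw [mul_pow, norm_add_sq_real, norm_add_sq_real, D.norm_mul, D.norm_mul] at h
  linear_combination h / 2

lemma aux_L3 (a b c d : A) :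
    ⟪D.mul a c, D.mul b d⟫ + ⟪D.mul a d, D.mul b c⟫ = 2 * ⟪a, b⟫ * ⟪c, d⟫ := by
  have h := aux_L2 D a b (c + d)
  rw [map_add, map_add, inner_add_left, inner_add_right, inner_add_right,
    norm_add_sq_real] at h
  have h1 := aux_L2 D a b c
  have h2 := aux_L2 D a b d
  linear_combination h - h1 - h2

lemma aux_L3' (a b c d : A) :
    ⟪D.mul a c, D.mul b d⟫ + ⟪D.mul b c, D.mul a d⟫ = 2 * ⟪a, b⟫ * ⟪c, d⟫ := by
  have h := aux_L1 D (a + b) c d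
  rw [map_add, LinearMap.add_apply, LinearMap.add_apply, inner_add_left, inner_add_right,
    inner_add_right, norm_add_sq_real] at h
  have h1 := aux_L1 D a c d
  have h2 := aux_L1 D b c d
  linear_combination h - h1 - h2

lemma aux_exL (a b c : A) : ⟪D.mul a b, c⟫ = ⟪b, D.mul (D.conj a) c⟫ := by
  have h := aux_L3' D a D.one b c
  rw [D.one_mul, D.one_mul] at h
  rw [aux_conj_eq, map_sub, LinearMap.sub_apply, map_smul, LinearMap.smul_apply, D.one_mul,
    inner_sub_right, real_inner_smul_right]
  linear_combination h

lemma aux_exR (a b c : A) : ⟪D.mul a c, b⟫ = ⟪a, D.mul b (D.conj c)⟫ := by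
  have h := aux_L3 D a b c D.one
  rw [D.mul_one, D.mul_one] at h
  rw [aux_conj_eq, map_sub, map_smul, D.mul_one, inner_sub_right, real_inner_smul_right]
  linear_combination h

lemma aux_conj_inner (a b : A) : ⟪D.conj a, D.conj b⟫ = ⟪a, b⟫ := by
  rw [aux_conj_eq, aux_conj_eq]
  have h1 : ⟪D.one, D.one⟫ = (1 : ℝ) := by
    rw [real_inner_self_eq_norm_sq, aux_norm_one]; norm_num
  rw [inner_sub_left, inner_sub_right, inner_sub_right, real_inner_smul_left,
    real_inner_smul_left, real_inner_smul_right, real_inner_smul_right, h1,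
    real_inner_comm D.one b]
  ring

lemma aux_id1 (a b c : A) :
    D.mul a (D.mul (D.conj b) c) + D.mul b (D.mul (D.conj a) c) = (2 * ⟪a, b⟫) • c := by
  apply ext_inner_right ℝ
  intro d
  rw [inner_add_left, aux_exL D a _ d, aux_exL D b _ d, real_inner_smul_left]
  have h := aux_L3' D (D.conj b) (D.conj a) c d
  rw [aux_conj_inner] at h
  linear_combination h - 2 * ⟪c, d⟫ * real_inner_comm b a

lemma aux_id2 (a b c : A) :
    D.mul (D.mul a (D.conj b)) c + D.mul (D.mul a (D.conj c)) b = (2 * ⟪b, c⟫) • a := by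
  apply ext_inner_right ℝ
  intro d
  rw [inner_add_left, aux_exR D _ d c, aux_exR D _ d b, real_inner_smul_left]
  have h := aux_L3 D a d (D.conj b) (D.conj c)
  rw [aux_conj_inner] at h
  linear_combination h

lemma aux_id3 (a b : A) :
    D.mul a (D.conj b) + D.mul b (D.conj a) = (2 * ⟪a, b⟫) • D.one := by
  have h := aux_id1 D a b D.one
  rwa [D.mul_one, D.mul_one] at h

end Aux

theorem nda_polarized_identities {A : Type*} [NormedAddCommGroup A] [InnerProductSpace ℝ A]
    (D : NormedDivisionAlgebra A) (a b c : A) :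
    D.mul a (D.mul (D.conj b) c) + D.mul b (D.mul (D.conj a) c) = (2 * ⟪a, b⟫) • c ∧
      D.mul (D.mul a (D.conj b)) c + D.mul (D.mul a (D.conj c)) b = (2 * ⟪b, c⟫) • a ∧
      D.mul a (D.conj b) + D.mul b (D.conj a) = (2 * ⟪a, b⟫) • D.one :=
  ⟨aux_id1 D a b c, aux_id2 D a b c, aux_id3 D a b⟩
end

section
/- Let A be a normed division algebra. Then for all a, b ∈ A one has ⟨a, b⟩ = ⟨a * conj(b), 1⟩, and moreover a * conj(a) = ‖a‖² • 1 and conj(a) * a = ‖a‖² • 1. -/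
open scoped RealInnerProductSpace

namespace NormedDivisionAlgebra

variable {A : Type*} [NormedAddCommGroup A] [InnerProductSpace ℝ A]

lemma norm_one_eq (D : NormedDivisionAlgebra A) : ‖D.one‖ = 1 := by
  have h := D.norm_mul D.one D.one
  rw [D.mul_one] at h
  have h0 : ‖D.one‖ ≠ 0 := norm_ne_zero_iff.mpr D.one_ne_zero
  have : ‖D.one‖ * ‖D.one‖ = 1 * ‖D.one‖ := by rw [_root_.one_mul]; exact h.symm
  exact mul_right_cancel₀ h0 this

lemma inner_mul_right (D : NormedDivisionAlgebra A) (a b c : A) :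
    ⟪D.mul a b, D.mul c b⟫ = ⟪a, c⟫ * ‖b‖ ^ 2 := by
  have h : ‖D.mul (a + c) b‖ ^ 2 = ‖a + c‖ ^ 2 * ‖b‖ ^ 2 := by rw [D.norm_mul]; ring
  rw [map_add, LinearMap.add_apply, norm_add_sq_real, D.norm_mul a b, D.norm_mul c b,
    norm_add_sq_real a c] at h
  linear_combination h / 2

lemma exchange (D : NormedDivisionAlgebra A) (a b c d : A) :
    ⟪D.mul a b, D.mul c d⟫ + ⟪D.mul a d, D.mul c b⟫ = 2 * ⟪a, c⟫ * ⟪b, d⟫ := by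
  have h := D.inner_mul_right a (b + d) c
  rw [map_add, map_add, norm_add_sq_real] at h
  simp only [inner_add_left, inner_add_right] at h
  have h1 := D.inner_mul_right a b c
  have h2 := D.inner_mul_right a d c
  linear_combination h - h1 - h2

lemma conj_eq (D : NormedDivisionAlgebra A) (b : A) :
    D.conj b = (2 * ⟪b, D.one⟫) • D.one - b := by
  rw [conj, im, re, D.norm_one_eq]
  simp only [one_pow, div_one]
  module

end NormedDivisionAlgebra

theorem nda_inner_eq_re_mul_conj {A : Type*} [NormedAddCommGroup A] [InnerProductSpace ℝ A]
    (D : NormedDivisionAlgebra A) (a b : A) :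
    ⟪a, b⟫ = ⟪D.mul a (D.conj b), D.one⟫ ∧
      D.mul a (D.conj a) = (‖a‖ ^ 2) • D.one ∧
      D.mul (D.conj a) a = (‖a‖ ^ 2) • D.one := by
  have hconj : ∀ x : A, D.mul a (D.conj x) = (2 * ⟪x, D.one⟫) • a - D.mul a x := by
    intro x
    rw [D.conj_eq, map_sub, map_smul, D.mul_one]
  have hfirst : ⟪a, b⟫ = ⟪D.mul a (D.conj b), D.one⟫ := by
    have he := D.exchange a b D.one D.one
    rw [D.mul_one, D.mul_one, D.one_mul] at he
    rw [hconj b, inner_sub_left, real_inner_smul_left]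
    linear_combination he
  have h2 : D.mul a (D.conj a) = (‖a‖ ^ 2) • D.one := by
    apply ext_inner_right ℝ
    intro c
    rw [hconj a, inner_sub_left, real_inner_smul_left, real_inner_smul_left]
    have he := D.exchange a a c D.one
    rw [D.mul_one, D.mul_one] at he
    have h1 := D.inner_mul_right D.one a c
    rw [D.one_mul] at h1
    linear_combination h1 - he
  have h3 : D.mul (D.conj a) a = D.mul a (D.conj a) := by
    rw [hconj a, D.conj_eq, map_sub, LinearMap.sub_apply, map_smul, LinearMap.smul_apply,
      D.one_mul]
  exact ⟨hfirst, h2, h3.trans h2⟩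
end

section
/- Let A be a normed division algebra and a ∈ A. Then a*a ∈ Re A if and only if a ∈ Re A or a ∈ Im A. (That is, the square of a is real if and only if a is either real or purely imaginary.) -/
open scoped RealInnerProductSpace

section Aux

variable {A : Type*} [NormedAddCommGroup A] [InnerProductSpace ℝ A]
  (D : NormedDivisionAlgebra A)

lemma nda_inner_self (a b : A) :
    ⟪D.mul a b, D.mul a b⟫ = ⟪a, a⟫ * ⟪b, b⟫ := by
  rw [real_inner_self_eq_norm_mul_norm, real_inner_self_eq_norm_mul_norm,
    real_inner_self_eq_norm_mul_norm, D.norm_mul]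
  ring

lemma nda_polar_left (a c b : A) :
    ⟪D.mul a b, D.mul c b⟫ = ⟪a, c⟫ * ⟪b, b⟫ := by
  have h1 := nda_inner_self D (a + c) b
  have h2 := nda_inner_self D a b
  have h3 := nda_inner_self D c b
  simp only [map_add, LinearMap.add_apply] at h1
  rw [real_inner_add_add_self, real_inner_add_add_self] at h1
  linarith

lemma nda_exchange (a b c d : A) :
    ⟪D.mul a b, D.mul c d⟫ + ⟪D.mul a d, D.mul c b⟫ = 2 * ⟪a, c⟫ * ⟪b, d⟫ := by
  have h1 := nda_polar_left D a c (b + d)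
  have h2 := nda_polar_left D a c b
  have h3 := nda_polar_left D a c d
  simp only [map_add, inner_add_left, inner_add_right] at h1
  have hbd : ⟪d, b⟫ = ⟪b, d⟫ := real_inner_comm _ _
  linear_combination h1 - h2 - h3 + ⟪a, c⟫ * hbd

lemma nda_polar_right (a b d : A) :
    ⟪D.mul a b, D.mul a d⟫ = ⟪a, a⟫ * ⟪b, d⟫ := by
  have h := nda_exchange D a b a d
  have hsym : ⟪D.mul a d, D.mul a b⟫ = ⟪D.mul a b, D.mul a d⟫ := real_inner_comm _ _
  linarith

lemma nda_im_sq (v : A) (hv : ⟪v, D.one⟫ = 0) :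
    D.mul v v = (-(‖v‖ ^ 2)) • D.one := by
  apply ext_inner_right ℝ
  intro w
  have h1 := nda_exchange D v v D.one w
  rw [D.one_mul, D.one_mul, hv] at h1
  have h2 : ⟪D.mul v w, v⟫ = ⟪v, v⟫ * ⟪w, D.one⟫ := by
    have := nda_polar_right D v w D.one
    rwa [D.mul_one] at this
  have h3 : ⟪D.one, w⟫ = ⟪w, D.one⟫ := real_inner_comm _ _
  have h4 : ⟪v, v⟫ = ‖v‖ ^ 2 := real_inner_self_eq_norm_sq v
  rw [real_inner_smul_left, h3, ← h4]
  linarith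

end Aux

theorem nda_sq_real_iff_real_or_imaginary {A : Type*} [NormedAddCommGroup A]
    [InnerProductSpace ℝ A] (D : NormedDivisionAlgebra A) (a : A) :
    D.mul a a ∈ D.ReSub ↔ (a ∈ D.ReSub ∨ a ∈ D.ImSub) := by
  have hone : ‖D.one‖ = 1 := by
    have h := D.norm_mul D.one D.one
    rw [D.one_mul] at h
    have h0 : ‖D.one‖ ≠ 0 := norm_ne_zero_iff.mpr D.one_ne_zero
    have h' : (1 : ℝ) * ‖D.one‖ = ‖D.one‖ * ‖D.one‖ := by rw [one_mul]; exact h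
    exact (mul_right_cancel₀ h0 h').symm
  have hone2 : ⟪D.one, D.one⟫ = 1 := by
    rw [real_inner_self_eq_norm_sq, hone]; norm_num
  set α := ⟪a, D.one⟫ with hα
  set v := a - α • D.one with hv
  have hvone : ⟪v, D.one⟫ = 0 := by
    rw [hv, inner_sub_left, real_inner_smul_left, hone2, ← hα]; ring
  have ha : a = α • D.one + v := by rw [hv]; abel
  have hvv := nda_im_sq D v hvone
  have hsq : D.mul a a = (α ^ 2 - ‖v‖ ^ 2) • D.one + (2 * α) • v := by
    conv_lhs => rw [ha]
    simp only [map_add, map_smul, LinearMap.add_apply, LinearMap.smul_apply,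
      D.one_mul, D.mul_one, hvv]
    module
  have hRe : ∀ x : A, x ∈ D.ReSub ↔ ∃ c : ℝ, x = c • D.one := by
    intro x
    simp [NormedDivisionAlgebra.ReSub, Submodule.mem_span_singleton, eq_comm]
  have hIm : a ∈ D.ImSub ↔ α = 0 := by
    rw [NormedDivisionAlgebra.ImSub, Submodule.mem_orthogonal_singleton_iff_inner_right,
      real_inner_comm]
  constructor
  · intro h
    rcases (hRe _).mp h with ⟨c, hc⟩
    rw [hsq] at hc
    have key : (2 * α) • v = (c - (α ^ 2 - ‖v‖ ^ 2)) • D.one := by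
      rw [sub_smul]
      rw [eq_sub_iff_add_eq, add_comm]
      exact hc
    have hin : ⟪(2 * α) • v, v⟫ = 0 := by
      rw [key, real_inner_smul_left, real_inner_comm, hvone, mul_zero]
    rw [real_inner_smul_left, real_inner_self_eq_norm_sq] at hin
    rcases mul_eq_zero.mp hin with h' | h'
    · right
      rw [hIm]
      linarith
    · left
      have : v = 0 := by
        rw [← norm_eq_zero]
        nlinarith [norm_nonneg v]
      rw [(hRe a)]
      exact ⟨α, by rw [ha, this, add_zero]⟩
  · rintro (h | h)
    · rcases (hRe a).mp h with ⟨c, hc⟩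
      rw [(hRe _)]
      refine ⟨c * c, ?_⟩
      rw [hc]
      simp only [map_smul, LinearMap.smul_apply, D.one_mul]
      module
    · rw [hIm] at h
      have hva : v = a := by rw [hv, h, zero_smul, sub_zero]
      rw [(hRe _)]
      exact ⟨-(‖a‖ ^ 2), by rw [← hva, hvv]⟩
end

section
/- Let A be a normed division algebra. Then the associator [a,b,c] = (a*b)*c − a*(b*c) is alternating: for all a, b ∈ A one has [a,a,b] = 0, [a,b,b] = 0, and [a,b,a] = 0; equivalently, the trilinear map (a,b,c) ↦ [a,b,c] is totally skew-symmetric in its arguments. -/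
open scoped RealInnerProductSpace

namespace NormedDivisionAlgebra

variable {A : Type*} [NormedAddCommGroup A] [InnerProductSpace ℝ A] (D : NormedDivisionAlgebra A)

lemma aux_norm_one : ‖D.one‖ = 1 := by
  have h := D.norm_mul D.one D.one
  rw [D.one_mul] at h
  have h0 : ‖D.one‖ ≠ 0 := norm_ne_zero_iff.mpr D.one_ne_zero
  have h1 : ‖D.one‖ * 1 = ‖D.one‖ * ‖D.one‖ := by rw [_root_.mul_one]; exact h
  exact (mul_left_cancel₀ h0 h1).symm

lemma aux_normsq (a b : A) : ‖D.mul a b‖ ^ 2 = ‖a‖ ^ 2 * ‖b‖ ^ 2 := by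
  rw [D.norm_mul]; ring

lemma aux_inner_left (a b c : A) : ⟪D.mul a b, D.mul a c⟫ = ‖a‖ ^ 2 * ⟪b, c⟫ := by
  have h : ‖D.mul a b + D.mul a c‖ ^ 2 = ‖a‖ ^ 2 * ‖b + c‖ ^ 2 := by
    rw [← map_add, D.norm_mul]; ring
  rw [norm_add_sq_real, norm_add_sq_real, aux_normsq, aux_normsq] at h
  linarith [h]

lemma aux_inner_right (a b c : A) : ⟪D.mul a c, D.mul b c⟫ = ⟪a, b⟫ * ‖c‖ ^ 2 := by
  have h : ‖D.mul a c + D.mul b c‖ ^ 2 = ‖a + b‖ ^ 2 * ‖c‖ ^ 2 := by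
    have : D.mul a c + D.mul b c = D.mul (a + b) c := by simp [map_add]
    rw [this, D.norm_mul]; ring
  rw [norm_add_sq_real, norm_add_sq_real, aux_normsq, aux_normsq] at h
  nlinarith [h]

lemma aux_exch (a b c d : A) :
    ⟪D.mul a c, D.mul b d⟫ + ⟪D.mul a d, D.mul b c⟫ = 2 * ⟪a, b⟫ * ⟪c, d⟫ := by
  have h := D.aux_inner_right a b (c + d)
  have hc := D.aux_inner_right a b c
  have hd := D.aux_inner_right a b d
  rw [norm_add_sq_real] at h
  simp only [map_add, inner_add_left, inner_add_right] at h
  -- h : ⟪mac,mbc⟫+⟪mac,mbd⟫+(⟪mad,mbc⟫+⟪mad,mbd⟫) = ⟪a,b⟫*(‖c‖²+2⟪c,d⟫+‖d‖²)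
  nlinarith [h, hc, hd]

lemma aux_conjL (a c d : A) :
    ⟪D.mul a c, d⟫ = 2 * ⟪a, D.one⟫ * ⟪c, d⟫ - ⟪D.mul a d, c⟫ := by
  have h := D.aux_exch a D.one c d
  rw [D.one_mul, D.one_mul] at h
  linarith

lemma aux_conjR (a b d : A) :
    ⟪D.mul a d, b⟫ = 2 * ⟪d, D.one⟫ * ⟪a, b⟫ - ⟪a, D.mul b d⟫ := by
  have h := D.aux_exch a b D.one d
  rw [D.mul_one, D.mul_one] at h
  have hcd : ⟪D.one, d⟫ = ⟪d, D.one⟫ := real_inner_comm _ _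
  rw [hcd] at h
  linarith

lemma aux_sq (a : A) : D.mul a a = (2 * ⟪a, D.one⟫) • a - (‖a‖ ^ 2) • D.one := by
  apply ext_inner_right ℝ
  intro c
  rw [aux_conjL]
  have h1 : ⟪D.mul a c, a⟫ = ‖a‖ ^ 2 * ⟪c, D.one⟫ := by
    have := D.aux_inner_left a c D.one
    rw [D.mul_one] at this
    rw [this, real_inner_comm]
  rw [h1]
  simp only [inner_sub_left, real_inner_smul_left]
  rw [real_inner_comm c D.one]

lemma aux_left_alt (a b : A) : D.mul a (D.mul a b) = D.mul (D.mul a a) b := by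
  rw [aux_sq]
  simp only [map_sub, map_smul, LinearMap.sub_apply, LinearMap.smul_apply, D.one_mul]
  apply ext_inner_right ℝ
  intro c
  rw [aux_conjL]
  have h2 : ⟪D.mul a c, D.mul a b⟫ = ‖a‖ ^ 2 * ⟪c, b⟫ := D.aux_inner_left a c b
  rw [h2]
  rw [real_inner_comm b c]
  simp only [inner_sub_left, real_inner_smul_left]

lemma aux_right_alt (a b : A) : D.mul (D.mul a b) b = D.mul a (D.mul b b) := by
  rw [aux_sq]
  simp only [map_sub, map_smul, D.mul_one]
  apply ext_inner_right ℝ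
  intro c
  rw [aux_conjR]
  have h2 : ⟪D.mul a b, D.mul c b⟫ = ⟪a, c⟫ * ‖b‖ ^ 2 := D.aux_inner_right a c b
  rw [h2]
  simp only [inner_sub_left, real_inner_smul_left]
  ring


lemma aux_expand1 (a b c : A) : D.assoc (a + b) (a + b) c =
    D.assoc a a c + D.assoc a b c + D.assoc b a c + D.assoc b b c := by
  simp only [NormedDivisionAlgebra.assoc, map_add, LinearMap.add_apply]
  abel

lemma aux_expand2 (a b c : A) : D.assoc a (b + c) (b + c) =
    D.assoc a b b + D.assoc a b c + D.assoc a c b + D.assoc a c c := by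
  simp only [NormedDivisionAlgebra.assoc, map_add, LinearMap.add_apply]
  abel

end NormedDivisionAlgebra

theorem nda_associator_alternating {A : Type*} [NormedAddCommGroup A] [InnerProductSpace ℝ A]
    (D : NormedDivisionAlgebra A) :
    (∀ a b : A, D.assoc a a b = 0) ∧
      (∀ a b : A, D.assoc a b b = 0) ∧
      (∀ a b : A, D.assoc a b a = 0) ∧
      (∀ a b c : A, D.assoc a b c = - D.assoc b a c) ∧
      (∀ a b c : A, D.assoc a b c = - D.assoc a c b) ∧
      (∀ a b c : A, D.assoc a b c = - D.assoc c b a) := by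
  have h1 : ∀ a b : A, D.assoc a a b = 0 := by
    intro a b
    simp only [NormedDivisionAlgebra.assoc]
    rw [← D.aux_left_alt, sub_self]
  have h2 : ∀ a b : A, D.assoc a b b = 0 := by
    intro a b
    simp only [NormedDivisionAlgebra.assoc]
    rw [D.aux_right_alt, sub_self]
  have skew1 : ∀ a b c : A, D.assoc a b c = - D.assoc b a c := by
    intro a b c
    have h0 := D.aux_expand1 a b c
    rw [h1, h1, h1, zero_add, add_zero] at h0
    exact eq_neg_of_add_eq_zero_left h0.symm
  have skew2 : ∀ a b c : A, D.assoc a b c = - D.assoc a c b := by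
    intro a b c
    have h0 := D.aux_expand2 a b c
    rw [h2, h2, h2, zero_add, add_zero] at h0
    exact eq_neg_of_add_eq_zero_left h0.symm
  have h3 : ∀ a b : A, D.assoc a b a = 0 := by
    intro a b
    rw [skew1, h2, neg_zero]
  have skew3 : ∀ a b c : A, D.assoc a b c = - D.assoc c b a := by
    intro a b c
    rw [skew2 a b c, skew1 a c b, skew2 c a b, neg_neg]
  exact ⟨h1, h2, h3, skew1, skew2, skew3⟩
end

section
/- Let A be a normed division algebra and let a, b, c ∈ Im A. Then a*(b*c) = −(1/2) • [a,b,c] − ⟨a*b, c⟩ • 1 − ⟨b,c⟩ • a + ⟨a,c⟩ • b − ⟨a,b⟩ • c, where [a,b,c] = (a*b)*c − a*(b*c) is the associator. -/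
open scoped RealInnerProductSpace

section Aux
variable {A : Type*} [NormedAddCommGroup A] [InnerProductSpace ℝ A]

lemma nda_mul_self_inner (D : NormedDivisionAlgebra A) (x y z : A) :
    ⟪D.mul x y, D.mul x z⟫ = ‖x‖^2 * ⟪y, z⟫ := by
  have e : D.mul x (y + z) = D.mul x y + D.mul x z := by simp
  have H : ‖D.mul x y + D.mul x z‖^2 = (‖x‖ * ‖y + z‖)^2 := by
    rw [← e, D.norm_mul]
  rw [norm_add_sq_real] at H
  have hy : ‖D.mul x y‖^2 = (‖x‖ * ‖y‖)^2 := by rw [D.norm_mul]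
  have hz : ‖D.mul x z‖^2 = (‖x‖ * ‖z‖)^2 := by rw [D.norm_mul]
  have hyz : ‖y + z‖^2 = ‖y‖^2 + 2*⟪y,z⟫ + ‖z‖^2 := norm_add_sq_real y z
  nlinarith [H, hy, hz, hyz]

lemma nda_exchange_s12 (D : NormedDivisionAlgebra A) (x y z w : A) :
    ⟪D.mul x z, D.mul y w⟫ + ⟪D.mul x w, D.mul y z⟫ = 2 * ⟪x, y⟫ * ⟪z, w⟫ := by
  have h := nda_mul_self_inner D (x + y) z w
  have e1 : D.mul (x + y) z = D.mul x z + D.mul y z := by simp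
  have e2 : D.mul (x + y) w = D.mul x w + D.mul y w := by simp
  rw [e1, e2, norm_add_sq_real, inner_add_left, inner_add_right, inner_add_right] at h
  have hx := nda_mul_self_inner D x z w
  have hy := nda_mul_self_inner D y z w
  have hc : ⟪D.mul y z, D.mul x w⟫ = ⟪D.mul x w, D.mul y z⟫ := real_inner_comm _ _
  linarith [h, hx, hy, hc]

end Aux

theorem nda_mul_mul_expansion {A : Type*} [NormedAddCommGroup A] [InnerProductSpace ℝ A]
    (D : NormedDivisionAlgebra A) (a b c : A)
    (ha : a ∈ D.ImSub) (hb : b ∈ D.ImSub) (hc : c ∈ D.ImSub) :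
    D.mul a (D.mul b c) =
      (-(1 / 2 : ℝ)) • D.assoc a b c - ⟪D.mul a b, c⟫ • D.one
        - ⟪b, c⟫ • a + ⟪a, c⟫ • b - ⟪a, b⟫ • c := by
  rw [NormedDivisionAlgebra.ImSub, Submodule.mem_orthogonal_singleton_iff_inner_left] at ha hb hc
  apply ext_inner_right ℝ
  intro v
  have h1 := nda_exchange_s12 D a D.one (D.mul b c) v
  have h2 := nda_exchange_s12 D b a c v
  have h3 := nda_exchange_s12 D (D.mul a b) v c D.one
  have h4 := nda_exchange_s12 D a v b c
  have h5 := nda_exchange_s12 D (D.mul a c) D.one v b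
  have h6 := nda_exchange_s12 D (D.mul a c) b v D.one
  have h7 := nda_exchange_s12 D (D.mul a c) v D.one b
  have h8 := nda_exchange_s12 D a D.one c b
  have h9 := nda_exchange_s12 D a D.one c D.one
  have hb1 : ⟪D.one, b⟫ = 0 := by rw [real_inner_comm]; exact hb
  simp only [D.one_mul, D.mul_one, ha, hb, hc, hb1, mul_zero, zero_mul] at h1 h2 h3 h5 h6 h7 h8 h9
  have c1 : ⟪D.mul a v, D.mul b c⟫ = ⟪D.mul b c, D.mul a v⟫ := real_inner_comm _ _
  have c2 : ⟪D.mul b v, D.mul a c⟫ = ⟪D.mul a c, D.mul b v⟫ := real_inner_comm _ _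
  have c3 : ⟪b, a⟫ = ⟪a, b⟫ := real_inner_comm _ _
  have c4 : ⟪v, b⟫ = ⟪b, v⟫ := real_inner_comm _ _
  have c5 : ⟪v, D.one⟫ = ⟪D.one, v⟫ := real_inner_comm _ _
  simp only [NormedDivisionAlgebra.assoc, inner_sub_left, inner_add_left, real_inner_smul_left,
    map_sub, map_add]
  linear_combination (1/2)*h1 - (1/2)*h2 + (1/2)*h3 - (1/2)*h4 - (1/2)*h5 + (1/2)*h6
    + (1/2)*h7 - (1/2)*c1 + (1/2)*c2 - ⟪c,v⟫*c3 + ⟪a,c⟫*c4 - ⟪D.mul a b, c⟫*c5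
    + ⟪v, D.one⟫*h8 - ⟪v, b⟫*h9
end

section
/- Let A be a normed division algebra and let a, b, c ∈ Im A. Then the calibration identity holds: ‖(1/2) • [a,b,c]‖² + ⟨a*b, c⟩² = ‖a‖²‖b‖²‖c‖² − ‖a‖²⟨b,c⟩² − ‖b‖²⟨a,c⟩² − ‖c‖²⟨a,b⟩² + 2⟨a,b⟩⟨a,c⟩⟨b,c⟩, where [a,b,c] = (a*b)*c − a*(b*c) is the associator. (The right-hand side equals ‖a ∧ b ∧ c‖².) -/
open scoped RealInnerProductSpace

namespace NormedDivisionAlgebra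

variable {A : Type*} [NormedAddCommGroup A] [InnerProductSpace ℝ A]
variable (D : NormedDivisionAlgebra A)

lemma inner_one_of_im' {a : A} (ha : a ∈ D.ImSub) : ⟪a, D.one⟫ = 0 := by
  have h := (Submodule.mem_orthogonal _ _).1 ha D.one (Submodule.mem_span_singleton_self _)
  rwa [real_inner_comm] at h

lemma inner_mul_left' (x y z : A) :
    ⟪D.mul x y, D.mul x z⟫ = ‖x‖ ^ 2 * ⟪y, z⟫ := by
  have h1 : ‖D.mul x y + D.mul x z‖ ^ 2 = ‖x‖ ^ 2 * ‖y + z‖ ^ 2 := by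
    rw [← map_add, D.norm_mul]; ring
  rw [norm_add_sq_real, norm_add_sq_real] at h1
  have h2 : ‖D.mul x y‖ ^ 2 = ‖x‖ ^ 2 * ‖y‖ ^ 2 := by rw [D.norm_mul]; ring
  have h3 : ‖D.mul x z‖ ^ 2 = ‖x‖ ^ 2 * ‖z‖ ^ 2 := by rw [D.norm_mul]; ring
  linear_combination (h1 - h2 - h3) / 2

lemma inner_mul_right' (x y z : A) :
    ⟪D.mul x z, D.mul y z⟫ = ⟪x, y⟫ * ‖z‖ ^ 2 := by
  have e : D.mul (x + y) z = D.mul x z + D.mul y z := by rw [map_add]; rfl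
  have h1 : ‖D.mul x z + D.mul y z‖ ^ 2 = ‖x + y‖ ^ 2 * ‖z‖ ^ 2 := by
    rw [← e, D.norm_mul]; ring
  rw [norm_add_sq_real, norm_add_sq_real] at h1
  have h2 : ‖D.mul x z‖ ^ 2 = ‖x‖ ^ 2 * ‖z‖ ^ 2 := by rw [D.norm_mul]; ring
  have h3 : ‖D.mul y z‖ ^ 2 = ‖y‖ ^ 2 * ‖z‖ ^ 2 := by rw [D.norm_mul]; ring
  linear_combination (h1 - h2 - h3) / 2

lemma exchange_left' (x y z w : A) :
    ⟪D.mul x y, D.mul z w⟫ + ⟪D.mul z y, D.mul x w⟫ = 2 * ⟪x, z⟫ * ⟪y, w⟫ := by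
  have e1 : D.mul (x + z) y = D.mul x y + D.mul z y := by rw [map_add]; rfl
  have e2 : D.mul (x + z) w = D.mul x w + D.mul z w := by rw [map_add]; rfl
  have h := D.inner_mul_left' (x + z) y w
  rw [e1, e2, norm_add_sq_real] at h
  simp only [inner_add_left, inner_add_right] at h
  have h1 := D.inner_mul_left' x y w
  have h2 := D.inner_mul_left' z y w
  linear_combination h - h1 - h2

lemma exchange_right' (x u y v : A) :
    ⟪D.mul x u, D.mul y v⟫ + ⟪D.mul x v, D.mul y u⟫ = 2 * ⟪x, y⟫ * ⟪u, v⟫ := by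
  have h := D.inner_mul_right' x y (u + v)
  rw [map_add, map_add, norm_add_sq_real] at h
  simp only [inner_add_left, inner_add_right] at h
  have h1 := D.inner_mul_right' x y u
  have h2 := D.inner_mul_right' x y v
  linear_combination h - h1 - h2

lemma mul_left_skew' {a : A} (ha : ⟪a, D.one⟫ = 0) (y z : A) :
    ⟪D.mul a y, z⟫ = -⟪y, D.mul a z⟫ := by
  have h := D.exchange_left' a y D.one z
  rw [D.one_mul, D.one_mul, ha] at h
  linarith

lemma mul_right_skew' {b : A} (hb : ⟪b, D.one⟫ = 0) (x z : A) :
    ⟪D.mul x b, z⟫ = -⟪x, D.mul z b⟫ := by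
  have h := D.exchange_right' x b z D.one
  rw [D.mul_one, D.mul_one, hb] at h
  linarith

lemma left_alt' {a : A} (ha : ⟪a, D.one⟫ = 0) (z : A) :
    D.mul a (D.mul a z) = -(‖a‖ ^ 2 • z) := by
  refine ext_inner_right ℝ fun v => ?_
  rw [D.mul_left_skew' ha, D.inner_mul_left', inner_neg_left, real_inner_smul_left]

lemma left_alt_polar' {a b : A} (ha : ⟪a, D.one⟫ = 0) (hb : ⟪b, D.one⟫ = 0) (z : A) :
    D.mul a (D.mul b z) + D.mul b (D.mul a z) = -((2 * ⟪a, b⟫) • z) := by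
  refine ext_inner_right ℝ fun v => ?_
  have hL := inner_add_left (D.mul a (D.mul b z)) (D.mul b (D.mul a z)) v (𝕜 := ℝ)
  have e1 := D.mul_left_skew' ha (D.mul b z) v
  have e2 := D.mul_left_skew' hb (D.mul a z) v
  have hR : ⟪-((2 * ⟪a, b⟫) • z), v⟫ = -(2 * ⟪a, b⟫ * ⟪z, v⟫) := by
    rw [inner_neg_left, real_inner_smul_left]
  have h := D.exchange_left' b z a v
  linear_combination hL + e1 + e2 - h - hR - 2 * ⟪z, v⟫ * real_inner_comm a b

lemma right_alt_polar' {a b : A} (ha : ⟪a, D.one⟫ = 0) (hb : ⟪b, D.one⟫ = 0) (z : A) :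
    D.mul (D.mul z a) b + D.mul (D.mul z b) a = -((2 * ⟪a, b⟫) • z) := by
  refine ext_inner_right ℝ fun v => ?_
  have hL := inner_add_left (D.mul (D.mul z a) b) (D.mul (D.mul z b) a) v (𝕜 := ℝ)
  have e1 := D.mul_right_skew' hb (D.mul z a) v
  have e2 := D.mul_right_skew' ha (D.mul z b) v
  have hR : ⟪-((2 * ⟪a, b⟫) • z), v⟫ = -(2 * ⟪a, b⟫ * ⟪z, v⟫) := by
    rw [inner_neg_left, real_inner_smul_left]
  have h := D.exchange_right' z a v b
  linear_combination hL + e1 + e2 - h - hR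

lemma mul_self' {a : A} (ha : ⟪a, D.one⟫ = 0) :
    D.mul a a = -(‖a‖ ^ 2 • D.one) := by
  have h := D.left_alt' ha D.one
  rwa [D.mul_one] at h

lemma anticomm' {a b : A} (ha : ⟪a, D.one⟫ = 0) (hb : ⟪b, D.one⟫ = 0) :
    D.mul a b + D.mul b a = -((2 * ⟪a, b⟫) • D.one) := by
  have h := D.left_alt_polar' ha hb D.one
  rwa [D.mul_one, D.mul_one] at h

lemma inner_cyclic' {a b c : A} (h1 : ⟪a, D.one⟫ = 0) (h2 : ⟪b, D.one⟫ = 0)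
    (h3 : ⟪c, D.one⟫ = 0) : ⟪D.mul b c, a⟫ = ⟪D.mul a b, c⟫ := by
  have hba : D.mul b a = -((2 * ⟪a, b⟫) • D.one) - D.mul a b :=
    eq_sub_of_add_eq' (D.anticomm' h1 h2)
  rw [D.mul_left_skew' h2 c a, hba, inner_sub_right, inner_neg_right, real_inner_smul_right,
    h3, real_inner_comm c (D.mul a b)]
  ring

end NormedDivisionAlgebra



theorem nda_calibration_identity {A : Type*} [NormedAddCommGroup A] [InnerProductSpace ℝ A]
    (D : NormedDivisionAlgebra A) (a b c : A)
    (ha : a ∈ D.ImSub) (hb : b ∈ D.ImSub) (hc : c ∈ D.ImSub) :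
    ‖(1 / 2 : ℝ) • D.assoc a b c‖ ^ 2 + ⟪D.mul a b, c⟫ ^ 2 =
      ‖a‖ ^ 2 * ‖b‖ ^ 2 * ‖c‖ ^ 2 - ‖a‖ ^ 2 * ⟪b, c⟫ ^ 2 - ‖b‖ ^ 2 * ⟪a, c⟫ ^ 2
        - ‖c‖ ^ 2 * ⟪a, b⟫ ^ 2 + 2 * ⟪a, b⟫ * ⟪a, c⟫ * ⟪b, c⟫ := by
  have h1 : ⟪a, D.one⟫ = 0 := D.inner_one_of_im' ha
  have h2 : ⟪b, D.one⟫ = 0 := D.inner_one_of_im' hb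
  have h3 : ⟪c, D.one⟫ = 0 := D.inner_one_of_im' hc
  have haa := D.mul_self' h1
  have hbb := D.mul_self' h2
  have hcc := D.mul_self' h3
  have hba : ⟪b, a⟫ = ⟪a, b⟫ := real_inner_comm _ _
  have hcb : ⟪c, b⟫ = ⟪b, c⟫ := real_inner_comm _ _
  have hbbn : ⟪b, b⟫ = ‖b‖ ^ 2 := real_inner_self_eq_norm_sq b
  -- (a*b)*a and c*(b*c)
  have haba' : D.mul (D.mul a b) a = -((2 * ⟪b, a⟫) • a) - -(‖a‖ ^ 2 • b) := by
    have h := D.right_alt_polar' h2 h1 a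
    rw [haa] at h
    have e : D.mul (-(‖a‖ ^ 2 • D.one)) b = -(‖a‖ ^ 2 • b) := by
      simp [map_neg, map_smul, LinearMap.neg_apply, LinearMap.smul_apply, D.one_mul]
    rw [e] at h
    exact eq_sub_of_add_eq h
  have hcbc' : D.mul c (D.mul b c) = -((2 * ⟪c, b⟫) • c) - -(‖c‖ ^ 2 • b) := by
    have h := D.left_alt_polar' h3 h2 c
    rw [hcc] at h
    have e : D.mul b (-(‖c‖ ^ 2 • D.one)) = -(‖c‖ ^ 2 • b) := by
      simp [map_neg, map_smul, D.mul_one]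
    rw [e] at h
    exact eq_sub_of_add_eq h
  -- Y
  have hY : ⟪D.mul (D.mul a b) a, D.mul c (D.mul b c)⟫ =
      4 * ⟪a, b⟫ * ⟪b, c⟫ * ⟪a, c⟫ - 2 * ⟪a, b⟫ ^ 2 * ‖c‖ ^ 2
        - 2 * ‖a‖ ^ 2 * ⟪b, c⟫ ^ 2 + ‖a‖ ^ 2 * ‖c‖ ^ 2 * ‖b‖ ^ 2 := by
    rw [haba', hcbc']
    simp only [inner_sub_left, inner_sub_right, inner_neg_left, inner_neg_right,
      real_inner_smul_left, real_inner_smul_right]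
    rw [hba, hcb, hbbn]
    ring
  -- X + Y = 2 φ²
  have hXY := D.exchange_right' (D.mul a b) (D.mul b c) c a
  rw [D.inner_cyclic' h1 h2 h3] at hXY
  -- c*a in terms of a*c
  have hca : D.mul c a = -((2 * ⟪a, c⟫) • D.one) - D.mul a c :=
    eq_sub_of_add_eq' (D.anticomm' h1 h3)
  have hX : ⟪D.mul (D.mul a b) (D.mul b c), D.mul c a⟫ =
      -(2 * ⟪a, c⟫ * ⟪D.mul (D.mul a b) (D.mul b c), D.one⟫)
        - ⟪D.mul (D.mul a b) (D.mul b c), D.mul a c⟫ := by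
    rw [hca, inner_sub_right, inner_neg_right, real_inner_smul_right]
  -- inner products with one
  have habone : ⟪D.mul a b, D.one⟫ = -⟪a, b⟫ := by
    rw [D.mul_left_skew' h1 b D.one, D.mul_one, real_inner_comm]
  have hbcone : ⟪D.mul b c, D.one⟫ = -⟪b, c⟫ := by
    rw [D.mul_left_skew' h2 c D.one, D.mul_one, real_inner_comm]
  have hacone : ⟪D.mul a c, D.one⟫ = -⟪a, c⟫ := by
    rw [D.mul_left_skew' h1 c D.one, D.mul_one, real_inner_comm]
  have hbcab : ⟪D.mul b c, D.mul a b⟫ = 2 * ⟪a, b⟫ * ⟪b, c⟫ - ‖b‖ ^ 2 * ⟪a, c⟫ := by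
    have h := D.exchange_left' b c a b
    have e : ⟪D.mul a c, D.mul b b⟫ = ‖b‖ ^ 2 * ⟪a, c⟫ := by
      rw [hbb, inner_neg_right, real_inner_smul_right, hacone]; ring
    rw [hba, hcb] at h
    linear_combination h - e
  have hP1 : ⟪D.mul (D.mul a b) (D.mul b c), D.one⟫ = ‖b‖ ^ 2 * ⟪a, c⟫ := by
    have h := D.exchange_left' (D.mul a b) (D.mul b c) D.one D.one
    simp only [D.one_mul, D.mul_one] at h
    rw [habone, hbcone] at h
    linear_combination h - hbcab
  -- S + U' = 0
  have hSU := D.exchange_left' (D.mul a b) c a (D.mul b c)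
  have haba0 : ⟪D.mul a b, a⟫ = 0 := by
    have h := D.inner_mul_left' a b D.one
    rw [D.mul_one] at h
    rw [h, h2, mul_zero]
  have hcbc0 : ⟪c, D.mul b c⟫ = 0 := by
    have h := D.inner_mul_right' D.one b c
    rw [D.one_mul] at h
    have e : ⟪D.one, b⟫ = 0 := by rw [real_inner_comm]; exact h2
    rw [h, e, zero_mul]
  rw [haba0, hcbc0] at hSU
  have hcommU : ⟪D.mul a c, D.mul (D.mul a b) (D.mul b c)⟫ =
      ⟪D.mul (D.mul a b) (D.mul b c), D.mul a c⟫ := real_inner_comm _ _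
  -- S
  have hS : ⟪D.mul (D.mul a b) c, D.mul a (D.mul b c)⟫ =
      2 * ⟪D.mul a b, c⟫ ^ 2
        - (4 * ⟪a, b⟫ * ⟪b, c⟫ * ⟪a, c⟫ - 2 * ⟪a, b⟫ ^ 2 * ‖c‖ ^ 2
          - 2 * ‖a‖ ^ 2 * ⟪b, c⟫ ^ 2 + ‖a‖ ^ 2 * ‖c‖ ^ 2 * ‖b‖ ^ 2)
        + 2 * ‖b‖ ^ 2 * ⟪a, c⟫ ^ 2 := by
    linear_combination hSU - hcommU - hX + hXY - hY + (2 * ⟪a, c⟫) * hP1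
  -- norms
  have hn1 : ‖D.mul (D.mul a b) c‖ ^ 2 = ‖a‖ ^ 2 * ‖b‖ ^ 2 * ‖c‖ ^ 2 := by
    rw [D.norm_mul, D.norm_mul]; ring
  have hn2 : ‖D.mul a (D.mul b c)‖ ^ 2 = ‖a‖ ^ 2 * ‖b‖ ^ 2 * ‖c‖ ^ 2 := by
    rw [D.norm_mul, D.norm_mul]; ring
  have haux1 : ‖(1 / 2 : ℝ) • D.assoc a b c‖ ^ 2 = 1 / 4 * ‖D.assoc a b c‖ ^ 2 := by
    rw [norm_smul, Real.norm_eq_abs, abs_of_pos (by norm_num : (0:ℝ) < 1 / 2)]; ring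
  have haux2 : ‖D.assoc a b c‖ ^ 2 = ‖D.mul (D.mul a b) c‖ ^ 2
      - 2 * ⟪D.mul (D.mul a b) c, D.mul a (D.mul b c)⟫ + ‖D.mul a (D.mul b c)‖ ^ 2 := by
    have e : D.assoc a b c = D.mul (D.mul a b) c - D.mul a (D.mul b c) := rfl
    rw [e, norm_sub_sq_real]
  linear_combination haux1 + (1 / 4) * haux2 + (1 / 4) * hn1 + (1 / 4) * hn2 - (1 / 2) * hS
end

section
/- Let V be a real inner product space equipped with a vector cross product, i.e. an ℝ-bilinear skew-symmetric map × : V × V → V satisfying ⟨v × w, v⟩ = 0 and ‖v × w‖² = ‖v‖²‖w‖² − ⟨v,w⟩² for all v, w ∈ V. On A = ℝ × V, equipped with the inner product ⟨(s,v),(t,w)⟩ = st + ⟨v,w⟩, define the multiplication (s,v)·(t,w) = (st − ⟨v,w⟩, s•w + t•v + v × w). Then this multiplication is ℝ-bilinear with two-sided multiplicative identity (1,0), and satisfies ‖p·q‖ = ‖p‖·‖q‖ for all p, q ∈ A; that is, A is a normed division algebra. -/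
open scoped RealInnerProductSpace

/-- On `A = ℝ × V` (with the `L²` product inner product
`⟨(s,v),(t,w)⟩ = s*t + ⟨v,w⟩`), the multiplication
`(s,v)·(t,w) = (s*t − ⟨v,w⟩, s•w + t•v + v × w)` induced by a vector cross
product `×` on `V` makes `A` a normed division algebra with identity `(1,0)`. -/
theorem cross_product_gives_normed_division_algebra
    {V : Type*} [NormedAddCommGroup V] [InnerProductSpace ℝ V]
    (cross : V →ₗ[ℝ] V →ₗ[ℝ] V)
    (cross_skew : ∀ v w : V, cross v w = - cross w v)
    (cross_orth : ∀ v w : V, ⟪cross v w, v⟫ = 0)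
    (cross_norm : ∀ v w : V, ‖cross v w‖ ^ 2 = ‖v‖ ^ 2 * ‖w‖ ^ 2 - ⟪v, w⟫ ^ 2) :
    ∃ D : NormedDivisionAlgebra (WithLp 2 (ℝ × V)),
      D.one = (WithLp.equiv 2 (ℝ × V)).symm (1, 0) ∧
      ∀ p q : WithLp 2 (ℝ × V),
        D.mul p q = (WithLp.equiv 2 (ℝ × V)).symm
          ((WithLp.equiv 2 (ℝ × V) p).1 * (WithLp.equiv 2 (ℝ × V) q).1
              - ⟪(WithLp.equiv 2 (ℝ × V) p).2, (WithLp.equiv 2 (ℝ × V) q).2⟫,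
            (WithLp.equiv 2 (ℝ × V) p).1 • (WithLp.equiv 2 (ℝ × V) q).2
              + (WithLp.equiv 2 (ℝ × V) q).1 • (WithLp.equiv 2 (ℝ × V) p).2
              + cross (WithLp.equiv 2 (ℝ × V) p).2 (WithLp.equiv 2 (ℝ × V) q).2) := by
  have cross_orth' : ∀ v w : V, ⟪cross v w, w⟫ = 0 := by
    intro v w
    rw [cross_skew, inner_neg_left, cross_orth, neg_zero]
  set mul : WithLp 2 (ℝ × V) →ₗ[ℝ] WithLp 2 (ℝ × V) →ₗ[ℝ] WithLp 2 (ℝ × V) :=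
    LinearMap.mk₂ ℝ (fun p q => (WithLp.equiv 2 (ℝ × V)).symm
        (p.fst * q.fst - ⟪p.snd, q.snd⟫, p.fst • q.snd + q.fst • p.snd + cross p.snd q.snd))
      (by
        intro p p' q
        apply (WithLp.equiv 2 (ℝ × V)).injective
        ext
        · simp [inner_add_left]; ring
        · simp; module)
      (by
        intro c p q
        apply (WithLp.equiv 2 (ℝ × V)).injective
        ext
        · simp [inner_smul_left]; ring
        · simp [smul_smul]; module)
      (by
        intro p q q'
        apply (WithLp.equiv 2 (ℝ × V)).injective
        ext
        · simp [inner_add_right]; ring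
        · simp; module)
      (by
        intro c p q
        apply (WithLp.equiv 2 (ℝ × V)).injective
        ext
        · simp [inner_smul_right]; ring
        · simp [smul_smul]; module) with hmul
  have hone : ∀ a : WithLp 2 (ℝ × V), mul ((WithLp.equiv 2 (ℝ × V)).symm (1, 0)) a = a := by
    intro a
    apply (WithLp.equiv 2 (ℝ × V)).injective
    ext <;> simp [hmul]
  have hone' : ∀ a : WithLp 2 (ℝ × V), mul a ((WithLp.equiv 2 (ℝ × V)).symm (1, 0)) = a := by
    intro a
    apply (WithLp.equiv 2 (ℝ × V)).injective
    ext <;> simp [hmul]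
  have hnorm : ∀ a b : WithLp 2 (ℝ × V), ‖mul a b‖ = ‖a‖ * ‖b‖ := by
    intro a b
    have key : ‖mul a b‖ ^ 2 = (‖a‖ * ‖b‖) ^ 2 := by
      rw [mul_pow, WithLp.prod_norm_sq_eq_of_L2, WithLp.prod_norm_sq_eq_of_L2,
        WithLp.prod_norm_sq_eq_of_L2]
      have h1 : (mul a b).fst = a.fst * b.fst - ⟪a.snd, b.snd⟫ := rfl
      have h2 : (mul a b).snd = a.fst • b.snd + b.fst • a.snd + cross a.snd b.snd := rfl
      rw [h1, h2, norm_add_sq_real, norm_add_sq_real]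
      simp only [norm_smul, Real.norm_eq_abs, inner_add_left, inner_smul_left,
        inner_smul_right, real_inner_smul_left, real_inner_smul_right,
        cross_orth, cross_orth', cross_norm, real_inner_self_eq_norm_sq]
      have hab : ⟪a.snd, cross a.snd b.snd⟫ = 0 := by
        rw [real_inner_comm]; exact cross_orth _ _
      have hbb : ⟪b.snd, cross a.snd b.snd⟫ = 0 := by
        rw [real_inner_comm]; exact cross_orth' _ _
      rw [hab, hbb, real_inner_comm b.snd a.snd]
      simp only [conj_trivial, mul_zero, add_zero, mul_pow, sq_abs]
      ring
    have h0 := norm_nonneg (mul a b)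
    have h1 := mul_nonneg (norm_nonneg a) (norm_nonneg b)
    calc ‖mul a b‖ = Real.sqrt (‖mul a b‖ ^ 2) := (Real.sqrt_sq h0).symm
      _ = Real.sqrt ((‖a‖ * ‖b‖) ^ 2) := by rw [key]
      _ = ‖a‖ * ‖b‖ := Real.sqrt_sq h1
  have hne : ((WithLp.equiv 2 (ℝ × V)).symm (1, 0) : WithLp 2 (ℝ × V)) ≠ 0 := by
    intro h
    have h1 := congrArg (fun x => (WithLp.equiv 2 (ℝ × V) x).1) h
    simpa using h1
  exact ⟨⟨mul, (WithLp.equiv 2 (ℝ × V)).symm (1, 0), hne, hone, hone', hnorm⟩, rfl,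
    fun p q => rfl⟩
end

section
/- Let A be a normed division algebra and let a, b, c ∈ Im A be orthonormal (that is, ‖a‖ = ‖b‖ = ‖c‖ = 1 and ⟨a,b⟩ = ⟨b,c⟩ = ⟨a,c⟩ = 0) with a × b = c. Then b × c = a and c × a = b. -/
open scoped RealInnerProductSpace

namespace NDAux

variable {A : Type*} [NormedAddCommGroup A] [InnerProductSpace ℝ A]
  (D : NormedDivisionAlgebra A)

/-- polarization of the composition law in the second argument. -/
lemma inner_mul_mul_left (a x y : A) :
    ⟪D.mul a x, D.mul a y⟫ = ‖a‖^2 * ⟪x, y⟫ := by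
  have h1 := real_inner_eq_norm_add_mul_self_sub_norm_mul_self_sub_norm_mul_self_div_two
    (D.mul a x) (D.mul a y)
  have h2 := real_inner_eq_norm_add_mul_self_sub_norm_mul_self_sub_norm_mul_self_div_two x y
  have hadd : D.mul a x + D.mul a y = D.mul a (x + y) := by rw [map_add]
  rw [h1, hadd, D.norm_mul, D.norm_mul, D.norm_mul, h2]
  ring

lemma inner_mul_mul_right (x y a : A) :
    ⟪D.mul x a, D.mul y a⟫ = ⟪x, y⟫ * ‖a‖^2 := by
  have h1 := real_inner_eq_norm_add_mul_self_sub_norm_mul_self_sub_norm_mul_self_div_two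
    (D.mul x a) (D.mul y a)
  have h2 := real_inner_eq_norm_add_mul_self_sub_norm_mul_self_sub_norm_mul_self_div_two x y
  have hadd : D.mul x a + D.mul y a = D.mul (x + y) a := by
    rw [map_add]; rfl
  rw [h1, hadd, D.norm_mul, D.norm_mul, D.norm_mul, h2]
  ring

/-- full linearization (exchange identity), left form. -/
lemma exchange_left (a b x y : A) :
    ⟪D.mul a x, D.mul b y⟫ + ⟪D.mul b x, D.mul a y⟫ = 2 * ⟪a, b⟫ * ⟪x, y⟫ := by
  have h := inner_mul_mul_left D (a + b) x y
  have hadd : ∀ z, D.mul (a + b) z = D.mul a z + D.mul b z := by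
    intro z; rw [map_add]; rfl
  rw [hadd, hadd, inner_add_left, inner_add_right, inner_add_right,
    inner_mul_mul_left, inner_mul_mul_left, norm_add_sq_real] at h
  nlinarith [h]

/-- full linearization, right form. -/
lemma exchange_right (x y a b : A) :
    ⟪D.mul x a, D.mul y b⟫ + ⟪D.mul x b, D.mul y a⟫ = 2 * ⟪x, y⟫ * ⟪a, b⟫ := by
  have h := inner_mul_mul_right D x y (a + b)
  rw [map_add, map_add, inner_add_left, inner_add_right, inner_add_right,
    inner_mul_mul_right, inner_mul_mul_right, norm_add_sq_real] at h
  nlinarith [h]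

variable {D}

/-- left multiplication by an imaginary element is skew-adjoint. -/
lemma skew_left {a : A} (ha : ⟪a, D.one⟫ = 0) (x y : A) :
    ⟪D.mul a x, y⟫ = -⟪x, D.mul a y⟫ := by
  have h := exchange_left D a D.one x y
  rw [D.one_mul, D.one_mul, ha] at h
  linarith

/-- right multiplication by an imaginary element is skew-adjoint. -/
lemma skew_right {a : A} (ha : ⟪a, D.one⟫ = 0) (x y : A) :
    ⟪D.mul x a, y⟫ = -⟪x, D.mul y a⟫ := by
  have h := exchange_right D x y a D.one
  rw [D.mul_one, D.mul_one, ha] at h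
  linarith

lemma sq_left {a : A} (ha : ⟪a, D.one⟫ = 0) (x : A) :
    D.mul a (D.mul a x) = -(‖a‖^2) • x := by
  apply ext_inner_right ℝ
  intro v
  rw [skew_left ha, real_inner_comm, inner_mul_mul_left, real_inner_smul_left]
  rw [real_inner_comm v x]; ring

lemma sq_right {a : A} (ha : ⟪a, D.one⟫ = 0) (x : A) :
    D.mul (D.mul x a) a = -(‖a‖^2) • x := by
  apply ext_inner_right ℝ
  intro v
  rw [skew_right ha, real_inner_comm, inner_mul_mul_right, real_inner_smul_left]
  rw [real_inner_comm v x]; ring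

lemma im_of_orth {x : A} (hx : ⟪x, D.one⟫ = 0) : D.im x = x := by
  simp [NormedDivisionAlgebra.im, NormedDivisionAlgebra.re, hx]

lemma sq_left_polar {a b : A} (ha : ⟪a, D.one⟫ = 0) (hb : ⟪b, D.one⟫ = 0) (x : A) :
    D.mul a (D.mul b x) + D.mul b (D.mul a x) = (-(2 * ⟪a, b⟫)) • x := by
  have hab : ⟪a + b, D.one⟫ = 0 := by rw [inner_add_left, ha, hb]; ring
  have h := sq_left hab x
  have hadd : ∀ z, D.mul (a + b) z = D.mul a z + D.mul b z := by
    intro z; rw [map_add]; rfl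
  simp only [hadd, map_add, LinearMap.add_apply, sq_left ha x, sq_left hb x, norm_add_sq_real] at h
  have : D.mul a (D.mul b x) + D.mul b (D.mul a x)
      = -(‖a‖ ^ 2 + 2 * ⟪a, b⟫ + ‖b‖ ^ 2) • x - (-‖a‖ ^ 2) • x - (-‖b‖ ^ 2) • x := by
    rw [← h]; abel
  rw [this]
  match_scalars
  ring

lemma mul_self_imag {a : A} (ha : ⟪a, D.one⟫ = 0) :
    D.mul a a = (-(‖a‖ ^ 2)) • D.one := by
  have h := sq_left ha D.one
  rwa [D.mul_one] at h

end NDAux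

theorem nda_cross_orthonormal_triple {A : Type*} [NormedAddCommGroup A]
    [InnerProductSpace ℝ A] (D : NormedDivisionAlgebra A) (a b c : A)
    (ha : a ∈ D.ImSub) (hb : b ∈ D.ImSub) (hc : c ∈ D.ImSub)
    (hna : ‖a‖ = 1) (hnb : ‖b‖ = 1) (hnc : ‖c‖ = 1)
    (hab : ⟪a, b⟫ = 0) (hbc : ⟪b, c⟫ = 0) (hac : ⟪a, c⟫ = 0)
    (habc : D.cross a b = c) :
    D.cross b c = a ∧ D.cross c a = b := by
  classical
  have h1a : ⟪a, D.one⟫ = 0 := by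
    rw [real_inner_comm]
    exact (Submodule.mem_orthogonal _ a).mp ha D.one (Submodule.mem_span_singleton_self _)
  have h1b : ⟪b, D.one⟫ = 0 := by
    rw [real_inner_comm]
    exact (Submodule.mem_orthogonal _ b).mp hb D.one (Submodule.mem_span_singleton_self _)
  have hab' : D.mul a b = c := by
    have hre : ⟪D.mul a b, D.one⟫ = 0 := by
      rw [NDAux.skew_left h1a, D.mul_one, real_inner_comm, hab]
      ring
    rw [← habc, NormedDivisionAlgebra.cross, NDAux.im_of_orth hre]
  -- b * c = a
  have hbc' : D.mul b c = a := by
    have h := NDAux.sq_left_polar h1a h1b b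
    rw [hab, NDAux.mul_self_imag h1b, hnb] at h
    have h2 : D.mul a ((-(1 ^ 2 : ℝ)) • D.one) = -a := by
      rw [map_smul, D.mul_one]
      match_scalars; ring
    rw [h2, hab'] at h
    have h3 : D.mul b c = (-(2 * (0:ℝ))) • b - (-a) := by rw [← h]; abel
    rw [h3]
    match_scalars <;> ring
  have hca' : D.mul c a = b := by
    have hanti : D.mul b a = -(D.mul a b) := by
      have h := NDAux.sq_left_polar h1a h1b D.one
      rw [D.mul_one, D.mul_one, hab] at h
      have : D.mul b a = (-(2 * (0:ℝ))) • D.one - D.mul a b := by rw [← h]; abel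
      rw [this]; match_scalars <;> ring
    have h := NDAux.sq_right h1a b
    rw [hanti, hab', map_neg, LinearMap.neg_apply, hna] at h
    exact neg_injective (h.trans (by norm_num : (-(1:ℝ) ^ 2) • b = -b))
  constructor
  · rw [NormedDivisionAlgebra.cross, hbc', NDAux.im_of_orth h1a]
  · rw [NormedDivisionAlgebra.cross, hca', NDAux.im_of_orth h1b]
end
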